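/- Assume K is algebraically closed. Then the ring A⁺ = W(E⁺) is complete and separated for the ker(θ)-adic topology, i.e., W(E⁺) is IsAdicComplete with respect to the ideal ker θ, where θ : W(E⁺) → O is Fontaine's homomorphism. -/

import Mathlib

open scoped NNReal

/-- Helper for the port: the old `Fact (v p ≠ 1)` instance gives the `Fact ¬IsUnit (p : O)`
instance that current Mathlib's `ModP`/`PreTilt` instances require. -/
theorem fact_not_isUnit_of_integers_of_fact (p : ℕ) {K : Type*} [Field K] {v : Valuation K ℝ≥0}
    {O : Type*} [CommRing O] [Algebra O K] (hv : v.Integers O) [hvp : Fact (v p ≠ 1)] :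
    Fact ¬IsUnit (p : O) :=
  Fact.mk <| mt hv.one_of_isUnit <| (map_natCast (algebraMap O K) p).symm ▸ hvp.1


section Generic

theorem aux_aeval_sub_mem {σ : Type*} {S : Type*} [CommRing S] (I : Ideal S)
    (P : MvPolynomial σ ℤ) (f g : σ → S) (h : ∀ i ∈ P.vars, f i - g i ∈ I) :
    MvPolynomial.aeval f P - MvPolynomial.aeval g P ∈ I := by
  rw [← Ideal.Quotient.eq]
  have hf : (Ideal.Quotient.mk I) (MvPolynomial.aeval f P)
      = MvPolynomial.eval₂ ((Ideal.Quotient.mk I).comp (algebraMap ℤ S))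
        ((Ideal.Quotient.mk I) ∘ f) P := by
    rw [MvPolynomial.aeval_def, MvPolynomial.eval₂_comp_left]
  have hg : (Ideal.Quotient.mk I) (MvPolynomial.aeval g P)
      = MvPolynomial.eval₂ ((Ideal.Quotient.mk I).comp (algebraMap ℤ S))
        ((Ideal.Quotient.mk I) ∘ g) P := by
    rw [MvPolynomial.aeval_def, MvPolynomial.eval₂_comp_left]
  rw [hf, hg, ← MvPolynomial.coe_eval₂Hom, ← MvPolynomial.coe_eval₂Hom]
  exact MvPolynomial.eval₂Hom_congr' rfl
    (fun i hi _ => by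
      show Ideal.Quotient.mk I (f i) = Ideal.Quotient.mk I (g i)
      rw [← sub_eq_zero, ← map_sub, Ideal.Quotient.eq_zero_iff_mem]
      exact h i hi) rfl

variable {p : ℕ} [hp : Fact p.Prime] {R : Type*} [CommRing R]

private theorem hpe {k : ℕ} (φ : MvPolynomial (Fin k × ℕ) ℤ) (x : Fin k → ℕ → R) :
    WittVector.peval φ x = MvPolynomial.aeval (Function.uncurry x) φ := rfl

theorem aux_coeff_add_sub_mem (I : Ideal R) (x y : WittVector p R) (n : ℕ)
    (h : ∀ j ≤ n, y.coeff j ∈ I) :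
    (x + y).coeff n - x.coeff n ∈ I := by
  have hx : x.coeff n = (x + 0).coeff n := by rw [add_zero]
  rw [hx, WittVector.add_coeff, WittVector.add_coeff, hpe, hpe]
  apply aux_aeval_sub_mem
  intro i hi
  have hvars := WittVector.wittAdd_vars (p := p) n hi
  rw [Finset.mem_product, Finset.mem_range] at hvars
  rcases i with ⟨b, j⟩
  have hj : j ≤ n := Nat.lt_succ_iff.mp hvars.2
  fin_cases b
  · simp [Function.uncurry]
  · simpa [Function.uncurry] using h j hj

theorem aux_coeff_sub_mem (I : Ideal R) (x y : WittVector p R) (n : ℕ)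
    (h : ∀ j ≤ n, x.coeff j - y.coeff j ∈ I) :
    (x - y).coeff n ∈ I := by
  have h0 : ((y - y : WittVector p R)).coeff n = 0 := by
    rw [sub_self]; exact WittVector.zero_coeff p R n
  have key := aux_aeval_sub_mem (σ := Fin 2 × ℕ) I (WittVector.wittSub p n)
    (Function.uncurry ![x.coeff, y.coeff]) (Function.uncurry ![y.coeff, y.coeff]) ?_
  · rw [← hpe, ← hpe, ← WittVector.sub_coeff, ← WittVector.sub_coeff, h0, sub_zero] at key
    exact key
  · intro i hi
    have hvars := WittVector.wittSub_vars (p := p) n hi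
    rw [Finset.mem_product, Finset.mem_range] at hvars
    rcases i with ⟨b, j⟩
    have hj : j ≤ n := Nat.lt_succ_iff.mp hvars.2
    fin_cases b
    · simpa [Function.uncurry] using h j hj
    · simp [Function.uncurry]

theorem aux_coeff_mul_mem (I : Ideal R) (x y : WittVector p R) (n : ℕ)
    (h : ∀ j ≤ n, x.coeff j ∈ I) :
    (x * y).coeff n ∈ I := by
  have h0 : ((0 * y : WittVector p R)).coeff n = 0 := by
    rw [zero_mul]; exact WittVector.zero_coeff p R n
  have key := aux_aeval_sub_mem (σ := Fin 2 × ℕ) I (WittVector.wittMul p n)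
    (Function.uncurry ![x.coeff, y.coeff])
    (Function.uncurry ![(0 : WittVector p R).coeff, y.coeff]) ?_
  · rw [← hpe, ← hpe, ← WittVector.mul_coeff, ← WittVector.mul_coeff, h0, sub_zero] at key
    exact key
  · intro i hi
    have hvars := WittVector.wittMul_vars (p := p) n hi
    rw [Finset.mem_product, Finset.mem_range] at hvars
    rcases i with ⟨b, j⟩
    have hj : j ≤ n := Nat.lt_succ_iff.mp hvars.2
    fin_cases b
    · simpa [Function.uncurry, WittVector.zero_coeff] using h j hj
    · simp [Function.uncurry]

variable [CharP R p]

theorem aux_mul_pow_p_coeff (x : WittVector p R) (k n : ℕ) (hn : n < k) :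
    (x * (p : WittVector p R) ^ k).coeff n = 0 := by
  induction k generalizing x n with
  | zero => omega
  | succ k ih =>
    have hrw : x * (p : WittVector p R) ^ (k + 1) = WittVector.verschiebung
        (WittVector.frobenius (x * (p : WittVector p R) ^ k)) := by
      rw [WittVector.verschiebung_frobenius, pow_succ, mul_assoc]
    rw [hrw]
    cases n with
    | zero => exact WittVector.verschiebung_coeff_zero _
    | succ n =>
      rw [WittVector.verschiebung_coeff_succ, WittVector.coeff_frobenius_charP,
        ih x n (by omega), zero_pow hp.out.ne_zero]

theorem aux_eq_mul_pow_p [PerfectRing R p] (x : WittVector p R) (k : ℕ)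
    (h : ∀ i < k, x.coeff i = 0) : ∃ y, x = y * (p : WittVector p R) ^ k := by
  induction k generalizing x with
  | zero => exact ⟨x, by simp⟩
  | succ k ih =>
    have h0 : x.coeff 0 = 0 := h 0 (by omega)
    set w : WittVector p R := WittVector.mk p (fun i => x.coeff (i + 1)) with hw
    have hxw : x = WittVector.verschiebung w := by
      ext n
      cases n with
      | zero => rw [WittVector.verschiebung_coeff_zero, h0]
      | succ n => rw [WittVector.verschiebung_coeff_succ, hw, WittVector.coeff_mk]
    set w' : WittVector p R := (WittVector.frobeniusEquiv p R).symm w with hw'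
    have hfw : WittVector.frobenius w' = w := by
      rw [hw']
      exact (WittVector.frobeniusEquiv p R).apply_symm_apply w
    have hx : x = w' * (p : WittVector p R) := by
      rw [hxw, ← hfw, WittVector.verschiebung_frobenius]
    have hw'c : ∀ i < k, w'.coeff i = 0 := by
      intro i hi
      have h1 : (w'.coeff i) ^ p = w.coeff i := by
        rw [← WittVector.coeff_frobenius_charP, hfw]
      have h2 : (w'.coeff i) ^ p = 0 := by
        rw [h1, hw, WittVector.coeff_mk]
        exact h (i + 1) (by omega)
      have h3 : frobenius R p (w'.coeff i) = frobenius R p 0 := by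
        rw [frobenius_def, h2, frobenius_def, zero_pow hp.out.ne_zero]
      exact (PerfectRing.bijective_frobenius (R := R) (p := p)).injective h3
    obtain ⟨y, hy⟩ := ih w' hw'c
    exact ⟨y, by rw [hx, hy, pow_succ, mul_assoc]⟩

theorem aux_add_pow_mem {S : Type*} [CommRing S] (a b : S) (m : ℕ) :
    (a + b) ^ (2 * m) ∈ Ideal.span ({a ^ m, b ^ m} : Set S) := by
  rw [add_pow]
  apply Ideal.sum_mem
  intro i hi
  rw [Finset.mem_range] at hi
  by_cases him : m ≤ i
  · have ha : a ^ i = a ^ m * a ^ (i - m) := by rw [← pow_add]; congr 1; omega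
    rw [ha]
    exact Ideal.mul_mem_right _ _ (Ideal.mul_mem_right _ _ (Ideal.mul_mem_right _ _
      (Ideal.subset_span (by simp))))
  · have hb : b ^ (2 * m - i) = b ^ m * b ^ (2 * m - i - m) := by
      rw [← pow_add]; congr 1; omega
    rw [hb]
    apply Ideal.mul_mem_right
    rw [mul_comm (a ^ i), mul_assoc]
    exact Ideal.mul_mem_right _ _ (Ideal.subset_span (by simp))

theorem aux_pow_p_dvd {S : Type*} [CommRing S] {p : ℕ} (a b : S) (m : ℕ) (hm : 1 ≤ m)
    (h : (p : S) ^ m ∣ a - b) : (p : S) ^ (m + 1) ∣ a ^ p - b ^ p := by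
  have key : a ^ p - b ^ p = (∑ i ∈ Finset.range p, a ^ i * b ^ (p - 1 - i)) * (a - b) :=
    (geom_sum₂_mul a b p).symm
  have hdvd : (a - b) ∣ (∑ i ∈ Finset.range p, a ^ i * b ^ (p - 1 - i)) - p * a ^ (p - 1) := by
    have hconst : (p : S) * a ^ (p - 1) = ∑ _i ∈ Finset.range p, a ^ (p - 1) := by
      rw [Finset.sum_const, Finset.card_range, nsmul_eq_mul]
    rw [hconst, ← Finset.sum_sub_distrib]
    apply Finset.dvd_sum
    intro i hi
    rw [Finset.mem_range] at hi
    have hsplit : a ^ (p - 1) = a ^ i * a ^ (p - 1 - i) := by rw [← pow_add]; congr 1; omega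
    rw [hsplit, ← mul_sub]
    apply Dvd.dvd.mul_left
    rw [show b ^ (p - 1 - i) - a ^ (p - 1 - i) = -(a ^ (p - 1 - i) - b ^ (p - 1 - i)) by ring]
    exact dvd_neg.mpr (sub_dvd_pow_sub_pow a b _)
  obtain ⟨t, ht⟩ := hdvd
  obtain ⟨c, hc⟩ := h
  have expand : a ^ p - b ^ p = (p : S) * a ^ (p - 1) * (a - b) + t * (a - b) ^ 2 := by
    rw [key, eq_add_of_sub_eq ht]; ring
  rw [expand, hc]
  apply dvd_add
  · exact ⟨a ^ (p - 1) * c, by ring⟩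
  · refine Dvd.dvd.mul_left ?_ t
    have : (p : S) ^ (2 * m) ∣ ((p:S) ^ m * c) ^ 2 := ⟨c ^ 2, by ring⟩
    exact dvd_trans (pow_dvd_pow _ (by omega)) this

end Generic


section PTHelpers

variable {p : ℕ} [Fact p.Prime] {O : Type*} [CommRing O] [Fact ¬IsUnit (p : O)]

theorem aux_pt_ext {x y : PreTilt O p} (h : ∀ n, PreTilt.coeff n x = PreTilt.coeff n y) :
    x = y :=
  Perfection.ext h

def aux_pt_mk (f : ℕ → ModP O p) (hf : ∀ n, f (n + 1) ^ p = f n) : PreTilt O p :=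
  ⟨f, hf⟩

theorem aux_pt_coeff_mk (f : ℕ → ModP O p) (hf : ∀ n, f (n + 1) ^ p = f n) (n : ℕ) :
    PreTilt.coeff n (aux_pt_mk f hf) = f n :=
  rfl

end PTHelpers

section Specific

variable (p : ℕ) [hp : Fact p.Prime]
    (K : Type*) [Field K] [IsAlgClosed K] (v : Valuation K ℝ≥0)
    (O : Type*) [CommRing O] [Algebra O K] (hv : v.Integers O)
    [hvp : Fact (v p ≠ 1)]
    [hO : IsAdicComplete (Ideal.span {(p : O)}) O]
    [Fact ¬IsUnit (p : O)]

include hv in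
theorem aux_root_seq : ∃ π : ℕ → O, π 0 = (p : O) ∧ ∀ n, (π (n + 1)) ^ p = π n := by
  have hroot : ∀ a : O, ∃ b : O, b ^ p = a := by
    intro a
    obtain ⟨x, hx⟩ := IsAlgClosed.exists_pow_nat_eq (algebraMap O K a) (n := p) hp.out.pos
    have hx1 : v x ≤ 1 := by
      have h1 : v x ^ p ≤ 1 := by rw [← map_pow, hx]; exact hv.map_le_one a
      exact (pow_le_one_iff_of_nonneg zero_le hp.out.ne_zero).mp h1
    obtain ⟨b, hb⟩ := hv.exists_of_le_one hx1
    exact ⟨b, hv.hom_inj (by rw [map_pow, hb, hx])⟩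
  choose r hr using hroot
  refine ⟨fun n => r^[n] (p : O), rfl, fun n => ?_⟩
  show (r^[n + 1] (p : O)) ^ p = r^[n] (p : O)
  rw [Function.iterate_succ_apply']
  exact hr _

theorem aux_pow_pow {π : ℕ → O} (hπ : ∀ n, (π (n + 1)) ^ p = π n) (n : ℕ) :
    (π n) ^ (p ^ n) = π 0 := by
  induction n with
  | zero => rw [pow_zero, pow_one]
  | succ n ih => rw [pow_succ, mul_comm, pow_mul, hπ n, ih]

include hv in
theorem aux_coeff_pow_pow (z : PreTilt O p) (n j : ℕ) :
    (PreTilt.coeff (n + j) z) ^ (p ^ j)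
      = PreTilt.coeff n z := by
  induction j with
  | zero => rw [pow_zero, pow_one, Nat.add_zero]
  | succ j ih =>
    rw [pow_succ, mul_comm, pow_mul, show n + (j + 1) = (n + j) + 1 by omega,
      PreTilt.coeff_pow_p, ih]

theorem aux_smul_top (m : ℕ) : (Ideal.span {(p : O)} ^ m • ⊤ : Submodule O O)
    = Ideal.span {(p : O) ^ m} := by
  rw [smul_eq_mul, Ideal.mul_top, Ideal.span_singleton_pow]

include hv in
/-- Every element of the pre-tilt lifts to a compatible sequence of `p`-power roots in `O`. -/
theorem aux_flat_lift (z : PreTilt O p) :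
    ∃ c : ℕ → O, (∀ k, (c (k + 1)) ^ p = c k) ∧
      ∀ k, Ideal.Quotient.mk (Ideal.span {(p : O)}) (c k)
          = PreTilt.coeff k z := by
  have hmk : ∀ a b : O, (p : O) ∣ a - b ↔ Ideal.Quotient.mk (Ideal.span {(p : O)}) a
      = Ideal.Quotient.mk (Ideal.span {(p : O)}) b := by
    intro a b
    rw [Ideal.Quotient.eq, Ideal.mem_span_singleton]
  choose ℓ hℓ using fun k => Ideal.Quotient.mk_surjective
    (I := Ideal.span {(p : O)}) (PreTilt.coeff k z)
  have hcoh : ∀ k m m', m ≤ m' →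
      (p : O) ^ (m + 1) ∣ ℓ (k + m') ^ (p ^ m') - ℓ (k + m) ^ (p ^ m) := by
    intro k m m' hmm
    have h1 : (p : O) ∣ ℓ (k + m') ^ (p ^ (m' - m)) - ℓ (k + m) := by
      rw [hmk, map_pow, hℓ, hℓ]
      have h := aux_coeff_pow_pow p K v O hv z (k + m) (m' - m)
      rw [show k + m + (m' - m) = k + m' by omega] at h
      exact h
    have h2 := dvd_sub_pow_of_dvd_sub h1 m
    have ha : (ℓ (k + m') ^ (p ^ (m' - m))) ^ (p ^ m) = ℓ (k + m') ^ (p ^ m') := by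
      rw [← pow_mul, ← pow_add, Nat.sub_add_cancel hmm]
    rwa [ha] at h2
  have hprec : ∀ k, ∃ c : O, ∀ m, ℓ (k + m) ^ (p ^ m) ≡ c
      [SMOD (Ideal.span {(p : O)} ^ m • ⊤ : Submodule O O)] := by
    intro k
    apply hO.toIsPrecomplete.prec
    intro m m' hmm
    rw [SModEq.sub_mem, aux_smul_top, Ideal.mem_span_singleton]
    have := hcoh k m m' hmm
    have h3 : (p : O) ^ m ∣ ℓ (k + m') ^ (p ^ m') - ℓ (k + m) ^ (p ^ m) :=
      dvd_trans (pow_dvd_pow _ (by omega)) this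
    rw [show ℓ (k + m) ^ p ^ m - ℓ (k + m') ^ p ^ m'
      = -(ℓ (k + m') ^ (p ^ m') - ℓ (k + m) ^ (p ^ m)) by ring]
    exact dvd_neg.mpr h3
  choose c hc using hprec
  have hcmod : ∀ k m, (p : O) ^ m ∣ ℓ (k + m) ^ (p ^ m) - c k := by
    intro k m
    have := (hc k m)
    rwa [SModEq.sub_mem, aux_smul_top, Ideal.mem_span_singleton] at this
  have hmkc : ∀ k, Ideal.Quotient.mk (Ideal.span {(p : O)}) (c k)
      = PreTilt.coeff k z := by
    intro k
    have h1 : (p : O) ∣ ℓ (k + 1) ^ (p ^ 1) - c k :=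
      dvd_trans (dvd_pow_self _ one_ne_zero) (hcmod k 1)
    rw [hmk] at h1
    rw [← h1, pow_one, map_pow, hℓ]
    have h := aux_coeff_pow_pow p K v O hv z k 1
    rw [pow_one] at h
    exact h
  refine ⟨c, fun k => ?_, hmkc⟩
  -- compatibility : c (k+1) ^ p = c k
  have key : ∀ m : ℕ, 1 ≤ m → (p : O) ^ (m + 1) ∣ c (k + 1) ^ p - c k := by
    intro m hm
    have h1 : (p : O) ^ (m + 1) ∣ (ℓ (k + 1 + m) ^ (p ^ m)) ^ p - c (k + 1) ^ p :=
      aux_pow_p_dvd _ _ m hm (hcmod (k + 1) m)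
    have ha : (ℓ (k + 1 + m) ^ (p ^ m)) ^ p = ℓ (k + (m + 1)) ^ (p ^ (m + 1)) := by
      rw [← pow_mul, ← pow_succ, show k + 1 + m = k + (m + 1) by omega]
    rw [ha] at h1
    have h2 : (p : O) ^ (m + 1) ∣ ℓ (k + (m + 1)) ^ (p ^ (m + 1)) - c k := hcmod k (m + 1)
    have := dvd_sub h2 h1
    rwa [show ℓ (k + (m + 1)) ^ p ^ (m + 1) - c k
      - (ℓ (k + (m + 1)) ^ p ^ (m + 1) - c (k + 1) ^ p) = c (k + 1) ^ p - c k by ring] at this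
  have key' : ∀ n : ℕ, (p : O) ^ n ∣ c (k + 1) ^ p - c k := by
    intro n
    rcases Nat.eq_zero_or_pos n with hn | hn
    · rw [hn, pow_zero]; exact one_dvd _
    · exact dvd_trans (pow_dvd_pow _ (by omega : n ≤ n + 1)) (key n hn)
  have h0 := hO.toIsHausdorff.haus (c (k + 1) ^ p - c k) (fun n => by
    rw [SModEq.zero, aux_smul_top, Ideal.mem_span_singleton]
    exact key' n)
  exact sub_eq_zero.mp h0

include hv in
/-- Division by powers of `ϖ` in the pre-tilt. -/
theorem aux_div (π : ℕ → O) (hπ0 : π 0 = (p : O)) (hπ : ∀ n, (π (n + 1)) ^ p = π n)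
    (ϖ : PreTilt O p)
    (hϖ : ∀ k, PreTilt.coeff k ϖ
        = Ideal.Quotient.mk (Ideal.span {(p : O)}) (π k))
    (n : ℕ) (z : PreTilt O p)
    (h : ∀ k, ∃ d : O, PreTilt.coeff k z
        = (Ideal.Quotient.mk (Ideal.span {(p : O)}) ((π k) ^ n * d) : ModP O p)) :
    ∃ y, z = ϖ ^ n * y := by
  haveI : IsDomain O := hv.hom_inj.isDomain _
  rcases Nat.eq_zero_or_pos n with hn | hn
  · exact ⟨z, by rw [hn, pow_zero, one_mul]⟩
  by_cases hp0 : (p : O) = 0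
  · -- char p case : π k = 0, hence z = 0
    have hπz : ∀ k, π k = 0 := by
      intro k
      induction k with
      | zero => rw [hπ0, hp0]
      | succ k ih =>
        have : (π (k + 1)) ^ p = 0 := by rw [hπ k, ih]
        exact pow_eq_zero_iff hp.out.ne_zero |>.mp this
    have hz : z = 0 := by
      apply aux_pt_ext
      intro k
      obtain ⟨d, hd⟩ := h k
      rw [hd, hπz k, zero_pow (by omega), zero_mul, map_zero]
      exact (map_zero _).symm
    exact ⟨0, by rw [hz, mul_zero]⟩
  · have hπpow : ∀ k, (π k) ^ (p ^ k) = (p : O) := by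
      intro k; rw [aux_pow_pow p O hπ k, hπ0]
    have hπne : ∀ k, π k ≠ 0 := by
      intro k hk
      apply hp0
      rw [← hπpow k, hk, zero_pow (pow_ne_zero k hp.out.ne_zero)]
    have hvπ : ∀ k, (v (algebraMap O K (π k))) ^ (p ^ k) = v (algebraMap O K (p : O)) := by
      intro k
      rw [← map_pow, ← map_pow, hπpow k]
    obtain ⟨c, hcp, hck⟩ := aux_flat_lift p K v O hv z
    have hc0 : ∀ k, (c k) ^ (p ^ k) = c 0 := aux_pow_pow p O hcp
    -- valuation bound on c 0
    have hvple1 : v (algebraMap O K (p : O)) ≤ 1 := hv.map_le_one _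
    have hvc0 : v (algebraMap O K (c 0)) ≤ (v (algebraMap O K (p : O))) ^ n := by
      obtain ⟨e, hd⟩ := h n
      have hmod : Ideal.Quotient.mk (Ideal.span {(p : O)}) (c n)
          = Ideal.Quotient.mk (Ideal.span {(p : O)}) ((π n) ^ n * e) := by
        rw [hck n, hd]
      obtain ⟨t, ht⟩ := Ideal.mem_span_singleton.mp (Ideal.Quotient.eq.mp hmod)
      have hcn : c n = (π n) ^ n * e + (p : O) * t := by
        rw [← ht]; ring
      have hb1 : v (algebraMap O K ((π n) ^ n * e)) ≤ (v (algebraMap O K (π n))) ^ n := by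
        rw [map_mul, map_pow, map_mul, map_pow]
        exact mul_le_of_le_one_right zero_le (hv.map_le_one e)
      have hb2 : v (algebraMap O K ((p : O) * t)) ≤ v (algebraMap O K (p : O)) := by
        rw [map_mul, map_mul]
        exact mul_le_of_le_one_right zero_le (hv.map_le_one t)
      have hvcn : v (algebraMap O K (c n)) ≤
          max ((v (algebraMap O K (π n))) ^ n) (v (algebraMap O K (p : O))) := by
        rw [hcn, map_add]
        exact le_trans (v.map_add _ _) (max_le_max hb1 hb2)
      have hrw : v (algebraMap O K (c 0)) = (v (algebraMap O K (c n))) ^ (p ^ n) := by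
        rw [← hc0 n, map_pow, map_pow]
      rw [hrw]
      rcases le_max_iff.mp hvcn with hcase | hcase
      · have hle := pow_le_pow_left₀ zero_le hcase (p ^ n)
        refine le_trans hle (le_of_eq ?_)
        rw [← pow_mul, mul_comm n (p ^ n), pow_mul, hvπ n]
      · have hle := pow_le_pow_left₀ zero_le hcase (p ^ n)
        refine le_trans hle ?_
        exact pow_le_pow_right_of_le_one' hvple1 (le_of_lt (Nat.lt_pow_self hp.out.one_lt))
    have hdvd : ∀ k, (π k) ^ n ∣ c k := by
      intro k
      apply hv.dvd_of_le
      have hkey : (v (algebraMap O K (c k))) ^ (p ^ k)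
          ≤ ((v (algebraMap O K ((π k) ^ n)))) ^ (p ^ k) := by
        have hlhs : (v (algebraMap O K (c k))) ^ (p ^ k) = v (algebraMap O K (c 0)) := by
          rw [← map_pow, ← map_pow, hc0 k]
        have hrhs : ((v (algebraMap O K ((π k) ^ n)))) ^ (p ^ k)
            = (v (algebraMap O K (p : O))) ^ n := by
          rw [map_pow, map_pow, ← pow_mul, mul_comm n (p ^ k), pow_mul, hvπ k]
        rw [hlhs, hrhs]
        exact hvc0
      exact le_of_pow_le_pow_left₀ (pow_ne_zero k hp.out.ne_zero) zero_le hkey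
    choose d' hd' using fun k => (hdvd k)
    have hd'c : ∀ k, (d' (k + 1)) ^ p = d' k := by
      intro k
      have hcan : (π k) ^ n * (d' (k + 1)) ^ p = (π k) ^ n * d' k := by
        calc (π k) ^ n * (d' (k + 1)) ^ p
            = ((π (k + 1)) ^ p) ^ n * (d' (k + 1)) ^ p := by rw [hπ k]
          _ = ((π (k + 1)) ^ n * d' (k + 1)) ^ p := by ring
          _ = (c (k + 1)) ^ p := by rw [← hd' (k + 1)]
          _ = c k := hcp k
          _ = (π k) ^ n * d' k := hd' k
      exact mul_left_cancel₀ (pow_ne_zero n (hπne k)) hcan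
    refine ⟨aux_pt_mk (fun k => Ideal.Quotient.mk (Ideal.span {(p : O)}) (d' k)) (fun k => ?_), ?_⟩
    · show (Ideal.Quotient.mk (Ideal.span {(p : O)}) (d' (k + 1)) : ModP O p) ^ p
        = Ideal.Quotient.mk (Ideal.span {(p : O)}) (d' k)
      rw [← map_pow, hd'c k]
    · apply aux_pt_ext
      intro k
      have hzk : PreTilt.coeff k z
          = Ideal.Quotient.mk (Ideal.span {(p : O)}) ((π k) ^ n * d' k) := by
        rw [← hck k, hd' k]
      rw [map_mul, map_pow, hϖ k, aux_pt_coeff_mk, hzk, map_mul, map_pow]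

include hv in
theorem aux_preVal_le_one (x : ModP O p) : ModP.preVal K v O p x ≤ 1 := by
  obtain ⟨a, rfl⟩ := Ideal.Quotient.mk_surjective x
  by_cases hx : (Ideal.Quotient.mk (Ideal.span {(p : O)}) a : ModP O p) = 0
  · rw [hx, ModP.preVal_zero]; exact zero_le
  · rw [ModP.preVal_mk hv hx]; exact hv.map_le_one a

theorem aux_val_le_one (z : PreTilt O p) : PreTilt.val K v O hv p z ≤ 1 := by
  by_cases hz : z = 0
  · rw [hz, map_zero]; exact zero_le
  · obtain ⟨m, hm⟩ : ∃ m, PreTilt.coeff m z ≠ 0 :=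
      not_forall.1 fun hzz => hz (aux_pt_ext fun m => by rw [map_zero]; exact hzz m)
    show PreTilt.valAux K v O p z ≤ 1
    rw [PreTilt.valAux_eq hv hm]
    exact pow_le_one₀ zero_le (aux_preVal_le_one p K v O hv _)

theorem aux_val_pi (π : ℕ → O) (hπ0 : π 0 = (p : O)) (hπ : ∀ n, (π (n + 1)) ^ p = π n)
    (ϖ : PreTilt O p)
    (hϖ : ∀ k, PreTilt.coeff k ϖ
        = Ideal.Quotient.mk (Ideal.span {(p : O)}) (π k)) :
    PreTilt.val K v O hv p ϖ ≤ v (p : K) := by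
  by_cases hz : ϖ = 0
  · rw [hz, map_zero]; exact zero_le
  · obtain ⟨m, hm⟩ : ∃ m, PreTilt.coeff m ϖ ≠ 0 :=
      not_forall.1 fun hzz => hz (aux_pt_ext fun m => by rw [map_zero]; exact hzz m)
    show PreTilt.valAux K v O p ϖ ≤ v (p : K)
    rw [PreTilt.valAux_eq hv hm]
    rw [hϖ m] at hm ⊢
    rw [ModP.preVal_mk hv hm, ← map_pow, ← map_pow, aux_pow_pow p O hπ m, hπ0, map_natCast]

include hv in
theorem aux_zero_of_all_div (π : ℕ → O) (hπ0 : π 0 = (p : O))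
    (hπ : ∀ n, (π (n + 1)) ^ p = π n) (ϖ : PreTilt O p)
    (hϖ : ∀ k, PreTilt.coeff k ϖ
        = Ideal.Quotient.mk (Ideal.span {(p : O)}) (π k))
    (z : PreTilt O p) (h : ∀ m : ℕ, ∃ w, z = ϖ ^ m * w) : z = 0 := by
  have hvp1 : v ((p : ℕ) : K) < 1 := by
    refine lt_of_le_of_ne ?_ hvp.out
    have := hv.map_le_one (p : O)
    rwa [map_natCast] at this
  by_contra hz
  have hpos : 0 < PreTilt.val K v O hv p z := by
    rw [pos_iff_ne_zero]
    exact fun h0 => hz ((PreTilt.map_eq_zero hv).mp h0)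
  obtain ⟨m, hmlt⟩ := exists_pow_lt_of_lt_one hpos hvp1
  obtain ⟨w, hw⟩ := h m
  have : PreTilt.val K v O hv p z ≤ (v ((p : ℕ) : K)) ^ m := by
    rw [hw, map_mul, map_pow]
    calc (PreTilt.val K v O hv p ϖ) ^ m * PreTilt.val K v O hv p w
        ≤ (PreTilt.val K v O hv p ϖ) ^ m * 1 :=
          mul_le_mul_right (aux_val_le_one p K v O hv w) _
      _ = (PreTilt.val K v O hv p ϖ) ^ m := mul_one _
      _ ≤ (v ((p : ℕ) : K)) ^ m :=
          pow_le_pow_left₀ zero_le (aux_val_pi p K v O hv π hπ0 hπ ϖ hϖ) m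
  exact absurd (lt_of_le_of_lt this hmlt) (lt_irrefl _)

end Specific

section PadicLimit

variable {p : ℕ} [hp : Fact p.Prime] {R : Type*} [CommRing R] [CharP R p]

theorem aux_padic_limit [PerfectRing R p] (g : ℕ → WittVector p R)
    (hg : ∀ m, ∃ w, g (m + 1) - g m = w * (p : WittVector p R) ^ m) :
    ∃ L, ∀ m, ∃ w, L - g m = w * (p : WittVector p R) ^ m := by
  have htel : ∀ m m', m ≤ m' → ∃ w, g m' - g m = w * (p : WittVector p R) ^ m := by
    intro m m' h
    induction m' with
    | zero =>
      refine ⟨0, ?_⟩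
      rw [Nat.le_zero.mp h]
      simp
    | succ m' ih =>
      rcases Nat.lt_or_ge m (m' + 1) with hlt | hge
      · have hm : m ≤ m' := by omega
        obtain ⟨w1, hw1⟩ := ih hm
        obtain ⟨w2, hw2⟩ := hg m'
        refine ⟨w2 * (p : WittVector p R) ^ (m' - m) + w1, ?_⟩
        have hsplit : (p : WittVector p R) ^ m' =
            (p : WittVector p R) ^ (m' - m) * (p : WittVector p R) ^ m := by
          rw [← pow_add]; congr 1; omega
        have : g (m' + 1) - g m = (g (m' + 1) - g m') + (g m' - g m) := by ring
        rw [this, hw1, hw2, hsplit]; ring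
      · have : m = m' + 1 := by omega
        refine ⟨0, by rw [this]; simp⟩
  have hstab : ∀ m m' i, m ≤ m' → i < m → (g m').coeff i = (g m).coeff i := by
    intro m m' i h hi
    obtain ⟨w, hw⟩ := htel m m' h
    have heq : g m' = g m + w * (p : WittVector p R) ^ m := by rw [← hw]; ring
    have hmem := aux_coeff_add_sub_mem (⊥ : Ideal R) (g m)
      (w * (p : WittVector p R) ^ m) i (fun j hj => by
        rw [aux_mul_pow_p_coeff w m j (by omega)]; exact Submodule.zero_mem ⊥)
    rw [← heq] at hmem
    exact sub_eq_zero.mp ((Submodule.mem_bot R).mp hmem)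
  refine ⟨WittVector.mk p (fun i => (g (i + 1)).coeff i), fun m => ?_⟩
  apply aux_eq_mul_pow_p
  intro i hi
  have hcoeff : ∀ j ≤ i, (WittVector.mk p (fun i => (g (i + 1)).coeff i)).coeff j
      = (g m).coeff j := by
    intro j hj
    have hj' : (WittVector.mk p (fun i => (g (i + 1)).coeff i)).coeff j
        = (g (j + 1)).coeff j := by rw [WittVector.coeff_mk]
    rw [hj']
    rcases Nat.le_total (j + 1) m with hc | hc
    · exact (hstab (j + 1) m j hc (by omega)).symm
    · exact hstab m (j + 1) j hc (by omega)
  have hmem := aux_coeff_sub_mem (⊥ : Ideal R)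
    (WittVector.mk p (fun i => (g (i + 1)).coeff i)) (g m) i (fun j hj => by
      rw [hcoeff j hj, sub_self]; exact Submodule.zero_mem ⊥)
  exact (Submodule.mem_bot R).mp hmem

end PadicLimit

/-- If `K` is algebraically closed, then `A⁺ = W(E⁺)` is complete and separated for the
`ker θ`-adic topology, where `θ : W(E⁺) → O` is Fontaine's homomorphism. -/
theorem wittVector_preTilt_isAdicComplete_ker_theta
    (p : ℕ) [Fact p.Prime]
    (K : Type*) [Field K] [IsAlgClosed K] (v : Valuation K ℝ≥0)
    (O : Type*) [CommRing O] [Algebra O K] (hv : v.Integers O)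
    [Fact (v p ≠ 1)]
    [IsAdicComplete (Ideal.span {(p : O)}) O]
    (θ : haveI := fact_not_isUnit_of_integers_of_fact p hv
      WittVector p (PreTilt O p) →+* O)
    (hθ : haveI := fact_not_isUnit_of_integers_of_fact p hv
      ∀ (x : PreTilt O p) (n : ℕ) (a : O),
      (Ideal.Quotient.mk (Ideal.span {(p : O)}) a : ModP O p) =
          Perfection.coeff (ModP O p) p n x →
        (p : O) ^ (n + 1) ∣ θ (WittVector.teichmuller p x) - a ^ p ^ n) :
    haveI := fact_not_isUnit_of_integers_of_fact p hv
    IsAdicComplete (RingHom.ker θ) (WittVector p (PreTilt O p)) := by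
  classical
  haveI := fact_not_isUnit_of_integers_of_fact p hv
  haveI : IsDomain (PreTilt O p) := PreTilt.isDomain K v O hv p
  obtain ⟨π, hπ0, hπp⟩ := aux_root_seq p K v O hv
  haveI hPR : PerfectRing (PreTilt O p) p := inferInstance
  set ϖ : PreTilt O p := ⟨fun k => Ideal.Quotient.mk (Ideal.span {(p : O)}) (π k),
      fun k => by
        show (Ideal.Quotient.mk (Ideal.span {(p : O)}) (π (k + 1)) : ModP O p) ^ p
          = Ideal.Quotient.mk (Ideal.span {(p : O)}) (π k)
        rw [← map_pow, hπp k]⟩ with hϖdef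
  have hϖ : ∀ k, PreTilt.coeff k ϖ
      = Ideal.Quotient.mk (Ideal.span {(p : O)}) (π k) := fun k => rfl
  set T : WittVector p (PreTilt O p) := WittVector.teichmuller p ϖ with hTdef
  set ξ : WittVector p (PreTilt O p) := T - (p : WittVector p (PreTilt O p))
    with hξdef
  -- θ of the Teichmüller lift of ϖ equals p
  have hθT : θ T = (p : O) := by
    have hdvd : ∀ n : ℕ, (p : O) ^ (n + 1) ∣ θ T - (p : O) := by
      intro n
      have h1 := hθ ϖ n (π n) (hϖ n).symm
      rwa [aux_pow_pow p O hπp n, hπ0] at h1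
    have h0 := (inferInstance : IsAdicComplete (Ideal.span {(p : O)}) O).toIsHausdorff.haus
      (θ T - (p : O)) (fun n => by
        rw [SModEq.zero, aux_smul_top p O, Ideal.mem_span_singleton]
        exact dvd_trans (pow_dvd_pow _ (by omega : n ≤ n + 1)) (hdvd n))
    exact sub_eq_zero.mp h0
  have hθξ : θ ξ = 0 := by
    rw [hξdef, map_sub, hθT, map_natCast, sub_self]
  -- coefficients of elements of span {p^k, T^k} are divisible by ϖ^k
  have hGdvd : ∀ (k : ℕ) (x : WittVector p (PreTilt O p)),
      x ∈ Ideal.span ({(p : WittVector p (PreTilt O p)) ^ k, T ^ k} :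
        Set (WittVector p (PreTilt O p))) → ∀ j < k, ϖ ^ k ∣ x.coeff j := by
    intro k x hx j hj
    obtain ⟨a, b, hab⟩ := Ideal.mem_span_pair.mp hx
    have hTk : T ^ k = WittVector.teichmuller p (ϖ ^ k) := (map_pow _ _ _).symm
    have h1 : ∀ j' ≤ j, (b * T ^ k).coeff j' ∈ Ideal.span ({ϖ ^ k} : Set (PreTilt O p)) := by
      intro j' hj'
      rw [mul_comm]
      apply aux_coeff_mul_mem
      intro j'' _
      rw [hTk]
      cases j'' with
      | zero =>
        rw [WittVector.teichmuller_coeff_zero]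
        exact Ideal.subset_span rfl
      | succ j'' =>
        rw [WittVector.teichmuller_coeff_pos p _ _ (Nat.succ_pos j'')]
        exact Submodule.zero_mem _
    have h2 : ∀ j' ≤ j, (a * (p : WittVector p (PreTilt O p)) ^ k).coeff j' = 0 :=
      fun j' hj' => aux_mul_pow_p_coeff a k j' (by omega)
    have hsum := aux_coeff_add_sub_mem (Ideal.span ({ϖ ^ k} : Set (PreTilt O p)))
      (b * T ^ k) (a * (p : WittVector p (PreTilt O p)) ^ k) j (fun j' hj' => by
        rw [h2 j' hj']; exact Submodule.zero_mem _)
    rw [show b * T ^ k + a * (p : WittVector p (PreTilt O p)) ^ k = x by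
      rw [← hab]; ring] at hsum
    rw [← Ideal.mem_span_singleton]
    have := Submodule.add_mem _ hsum (h1 j le_rfl)
    rwa [sub_add_cancel] at this
  -- ξ^(2k) belongs to span {p^k, T^k}
  have hξG : ∀ k : ℕ, ξ ^ (2 * k) ∈ Ideal.span ({(p : WittVector p (PreTilt O p)) ^ k,
      T ^ k} : Set (WittVector p (PreTilt O p))) := by
    intro k
    have h1 : ξ = T + (-(p : WittVector p (PreTilt O p))) := by rw [hξdef]; ring
    rw [h1]
    have h2 := aux_add_pow_mem T (-(p : WittVector p (PreTilt O p))) k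
    refine Ideal.span_le.mpr ?_ h2
    rintro y hy
    rcases hy with rfl | hy
    · exact Ideal.subset_span (by simp)
    · rw [Set.mem_singleton_iff] at hy
      subst hy
      rw [neg_pow]
      exact Ideal.mul_mem_left _ _ (Ideal.subset_span (by simp))
  have hξdvd : ∀ (k : ℕ) (c : WittVector p (PreTilt O p)) (j : ℕ), j < k →
      ϖ ^ k ∣ (ξ ^ (2 * k) * c).coeff j :=
    fun k c j hj => hGdvd k _ (Ideal.mul_mem_right c _ (hξG k)) j hj
  -- weak limits with respect to the (p, [ϖ])-topology
  have WL : ∀ g : ℕ → WittVector p (PreTilt O p),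
      (∀ n m, n ≤ m → ∀ i < n, ϖ ^ n ∣ (g m).coeff i - (g n).coeff i) →
      ∃ L : WittVector p (PreTilt O p),
        ∀ n, ∀ i < n, ϖ ^ n ∣ L.coeff i - (g n).coeff i := by
    intro g hg
    have hπk0 : ∀ k n : ℕ, p ^ k ≤ n →
        (Ideal.Quotient.mk (Ideal.span {(p : O)}) (π k) : ModP O p) ^ n = 0 := by
      intro k n hn
      have hpk : (Ideal.Quotient.mk (Ideal.span {(p : O)}) (π k) : ModP O p) ^ (p ^ k)
          = 0 := by
        rw [← map_pow, aux_pow_pow p O hπp k, hπ0, Ideal.Quotient.eq_zero_iff_mem]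
        exact Ideal.subset_span rfl
      calc (Ideal.Quotient.mk (Ideal.span {(p : O)}) (π k) : ModP O p) ^ n
          = ((Ideal.Quotient.mk (Ideal.span {(p : O)}) (π k) : ModP O p) ^ (p ^ k))
            * (Ideal.Quotient.mk (Ideal.span {(p : O)}) (π k) : ModP O p) ^ (n - p ^ k) := by
            rw [← pow_add]; congr 1; omega
        _ = 0 := by rw [hpk, zero_mul]
    have hstab : ∀ i k n m, max (i + 1) (p ^ k) ≤ n → n ≤ m →
        PreTilt.coeff k ((g m).coeff i)
          = PreTilt.coeff k ((g n).coeff i) := by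
      intro i k n m hn hnm
      obtain ⟨u, hu⟩ := hg n m hnm i (by omega)
      have hck := congrArg (PreTilt.coeff k) hu
      rw [map_sub, map_mul, map_pow, hϖ k, hπk0 k n (le_trans (le_max_right _ _) hn),
        zero_mul] at hck
      exact sub_eq_zero.mp hck
    set N : ℕ → ℕ → ℕ := fun i k => max (i + 1) (p ^ k) with hN
    set X : ℕ → ℕ → ModP O p :=
      fun i k => PreTilt.coeff k ((g (N i k)).coeff i) with hX
    have hXc : ∀ i k, X i (k + 1) ^ p = X i k := by
      intro i k
      set M := max (N i k) (N i (k + 1)) with hM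
      have h1 : X i (k + 1) = PreTilt.coeff (k + 1) ((g M).coeff i) :=
        (hstab i (k + 1) (N i (k + 1)) M le_rfl (le_max_right _ _)).symm
      have h3 : PreTilt.coeff k ((g M).coeff i) = X i k :=
        hstab i k (N i k) M le_rfl (le_max_left _ _)
      rw [h1, PreTilt.coeff_pow_p, h3]
    set L : WittVector p (PreTilt O p) :=
      WittVector.mk p (fun i => aux_pt_mk (fun k => X i k) (hXc i)) with hL
    refine ⟨L, fun n i hi => ?_⟩
    have hLcoeff : ∀ k, PreTilt.coeff k (L.coeff i) = X i k := by
      intro k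
      rw [hL]
      have : (WittVector.mk p
          (fun i => aux_pt_mk (fun k => X i k) (hXc i))).coeff i
          = aux_pt_mk (fun k => X i k) (hXc i) :=
        congrFun (WittVector.coeff_mk p _) i
      rw [this, aux_pt_coeff_mk]
    obtain ⟨y, hy⟩ := aux_div p K v O hv π hπ0 hπp ϖ hϖ n (L.coeff i - (g n).coeff i) (by
      intro k
      set M := max (N i k) n with hM
      obtain ⟨u, hu⟩ := hg n M (le_max_right _ _) i hi
      obtain ⟨e, he⟩ := Ideal.Quotient.mk_surjective
        (I := Ideal.span {(p : O)}) (PreTilt.coeff k u)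
      refine ⟨e, ?_⟩
      have h1 : PreTilt.coeff k (L.coeff i)
          = PreTilt.coeff k ((g M).coeff i) := by
        rw [hLcoeff k]
        exact (hstab i k (N i k) M le_rfl (le_max_left _ _)).symm
      have hck := congrArg (PreTilt.coeff k) hu
      rw [map_sub, map_mul, map_pow, hϖ k] at hck
      rw [map_sub, h1, hck, map_mul, map_pow, he]
    )
    exact ⟨y, hy⟩
  have hpp : p.Prime := Fact.out
  have hsmulA : ∀ m : ℕ, ((Ideal.span {ξ}) ^ m • ⊤ :
      Submodule (WittVector p (PreTilt O p)) (WittVector p (PreTilt O p)))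
      = Ideal.span {ξ ^ m} := fun m => by
    rw [smul_eq_mul, Ideal.mul_top, Ideal.span_singleton_pow]
  have hξne : ξ ≠ 0 := by
    intro h
    have hTp : T = (p : WittVector p (PreTilt O p)) := by
      rw [hξdef] at h
      exact sub_eq_zero.mp h
    have h1 : T.coeff 1 = 0 := WittVector.teichmuller_coeff_pos p ϖ 1 one_pos
    rw [hTp, WittVector.coeff_p_one] at h1
    exact one_ne_zero h1
  -- division by ϖ in the first coefficient
  have hdiv1 : ∀ z : PreTilt O p, PreTilt.coeff 0 z = 0 →
      ∃ cc, z = ϖ * cc := by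
    intro z hz
    obtain ⟨y, hy⟩ := aux_div p K v O hv π hπ0 hπp ϖ hϖ 1 z (by
      intro k
      obtain ⟨b, hb⟩ := Ideal.Quotient.mk_surjective
        (I := Ideal.span {(p : O)}) (PreTilt.coeff k z)
      have hb0 : (Ideal.Quotient.mk (Ideal.span {(p : O)}) (b ^ p ^ k) : ModP O p)
          = 0 := by
        rw [map_pow, hb]
        have h1 := aux_coeff_pow_pow p K v O hv z 0 k
        rw [Nat.zero_add] at h1
        rw [h1, hz]
      obtain ⟨t, ht⟩ := Ideal.mem_span_singleton.mp (Ideal.Quotient.eq_zero_iff_mem.mp hb0)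
      have hvb : v (algebraMap O K b) ^ p ^ k ≤ v (algebraMap O K (π k)) ^ p ^ k := by
        have hL : v (algebraMap O K b) ^ p ^ k = v (algebraMap O K ((p : O) * t)) := by
          rw [← map_pow, ← map_pow, ht]
        have hR : v (algebraMap O K (π k)) ^ p ^ k = v (algebraMap O K (p : O)) := by
          rw [← map_pow, ← map_pow, aux_pow_pow p O hπp k, hπ0]
        rw [hL, hR, map_mul, map_mul]
        exact mul_le_of_le_one_right zero_le (hv.map_le_one t)
      have hvb' : v (algebraMap O K b) ≤ v (algebraMap O K (π k)) :=
        le_of_pow_le_pow_left₀ (pow_ne_zero k hpp.ne_zero) zero_le hvb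
      obtain ⟨e, he⟩ := hv.dvd_of_le hvb'
      exact ⟨e, by rw [← hb, he, pow_one]⟩)
    rw [pow_one] at hy
    exact ⟨y, hy⟩
  -- one step of division by ξ inside the kernel
  have hstep : ∀ x' : WittVector p (PreTilt O p), θ x' = 0 →
      ∃ cc w, x' = ξ * WittVector.teichmuller p cc
        + (WittVector.teichmuller p cc + w) * (p : WittVector p (PreTilt O p))
      ∧ θ (WittVector.teichmuller p cc + w) * (p : O) = 0 := by
    intro x' hx'
    have h00 : (x' - WittVector.teichmuller p (x'.coeff 0)).coeff 0 = 0 := by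
      have hmem := aux_coeff_sub_mem (⊥ : Ideal (PreTilt O p)) x'
        (WittVector.teichmuller p (x'.coeff 0)) 0 (fun j hj => by
          rw [Nat.le_zero.mp hj, WittVector.teichmuller_coeff_zero, sub_self]
          exact Submodule.zero_mem ⊥)
      exact (Submodule.mem_bot _).mp hmem
    obtain ⟨w, hw⟩ := aux_eq_mul_pow_p (x' - WittVector.teichmuller p (x'.coeff 0)) 1
      (fun i hi => by rw [show i = 0 by omega]; exact h00)
    rw [pow_one] at hw
    have hθt : θ (WittVector.teichmuller p (x'.coeff 0)) = -θ w * (p : O) := by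
      have h1 : WittVector.teichmuller p (x'.coeff 0)
          = x' - w * (p : WittVector p (PreTilt O p)) := by
        rw [← hw]; ring
      rw [h1, map_sub, hx', map_mul, map_natCast]; ring
    obtain ⟨a, ha⟩ := Ideal.Quotient.mk_surjective
      (I := Ideal.span {(p : O)}) (PreTilt.coeff 0 (x'.coeff 0))
    have h3 := hθ (x'.coeff 0) 0 a ha
    rw [pow_zero, pow_one, pow_one] at h3
    have hpa : (p : O) ∣ a := by
      have h4 : (p : O) ∣ θ (WittVector.teichmuller p (x'.coeff 0)) := ⟨-θ w, by rw [hθt]; ring⟩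
      have := dvd_sub h4 h3
      rwa [sub_sub_cancel] at this
    have h0z : PreTilt.coeff 0 (x'.coeff 0) = 0 := by
      rw [← ha, Ideal.Quotient.eq_zero_iff_mem, Ideal.mem_span_singleton]
      exact hpa
    obtain ⟨cc, hcc⟩ := hdiv1 (x'.coeff 0) h0z
    refine ⟨cc, w, ?_, ?_⟩
    · have hT2 : WittVector.teichmuller p (x'.coeff 0) = T * WittVector.teichmuller p cc := by
        rw [hcc, map_mul]
      have hx'eq : x' = T * WittVector.teichmuller p cc
          + w * (p : WittVector p (PreTilt O p)) := by
        rw [← hT2, ← hw]; ring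
      rw [hx'eq, hξdef]; ring
    · have heq : x' = ξ * WittVector.teichmuller p cc
          + (WittVector.teichmuller p cc + w) * (p : WittVector p (PreTilt O p)) := by
        have hT2 : WittVector.teichmuller p (x'.coeff 0) = T * WittVector.teichmuller p cc := by
          rw [hcc, map_mul]
        have hx'eq : x' = T * WittVector.teichmuller p cc
            + w * (p : WittVector p (PreTilt O p)) := by
          rw [← hT2, ← hw]; ring
        rw [hx'eq, hξdef]; ring
      have := congrArg θ heq
      rw [hx', map_add, map_mul, map_mul, hθξ, zero_mul, zero_add, map_natCast] at this
      exact this.symm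
  -- the kernel of θ is generated by ξ
  have hker : RingHom.ker θ = Ideal.span {ξ} := by
    apply le_antisymm
    · intro x hx
      rw [RingHom.mem_ker] at hx
      rw [Ideal.mem_span_singleton]
      by_cases hp0 : (p : O) = 0
      · -- characteristic p case
        haveI : IsDomain O := hv.hom_inj.isDomain _
        have hπz : ∀ k, π k = 0 := by
          intro k
          induction k with
          | zero => rw [hπ0, hp0]
          | succ k ih =>
            have h1 : (π (k + 1)) ^ p = 0 := by rw [hπp k, ih]
            exact pow_eq_zero_iff hpp.ne_zero |>.mp h1
        have hϖ0 : ϖ = 0 := aux_pt_ext fun k => by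
          rw [hϖ k, hπz k, map_zero, map_zero]
        have hξp : ξ = -(p : WittVector p (PreTilt O p)) := by
          rw [hξdef, hTdef, hϖ0, WittVector.teichmuller_zero, zero_sub]
        obtain ⟨cc, w, heq, -⟩ := hstep x hx
        refine ⟨WittVector.teichmuller p cc - (WittVector.teichmuller p cc + w), ?_⟩
        rw [heq, hξp]; ring
      · -- characteristic zero case
        haveI : IsDomain O := hv.hom_inj.isDomain _
        have hstep' : ∀ x' : WittVector p (PreTilt O p), θ x' = 0 →
            ∃ y z', x' = ξ * y + z' * (p : WittVector p (PreTilt O p)) ∧ θ z' = 0 := by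
          intro x' hx'
          obtain ⟨cc, w, heq, hzero⟩ := hstep x' hx'
          exact ⟨WittVector.teichmuller p cc, WittVector.teichmuller p cc + w, heq,
            (mul_eq_zero.mp hzero).resolve_right hp0⟩
        choose Y Z hYZ hZker using hstep'
        set g : ℕ → {a : WittVector p (PreTilt O p) // θ a = 0} :=
          fun m => Nat.rec ⟨x, hx⟩ (fun _ prev => ⟨Z prev.1 prev.2, hZker prev.1 prev.2⟩) m
          with hgdef
        have hgdec : ∀ m, (g m).1 = ξ * Y (g m).1 (g m).2
            + (g (m + 1)).1 * (p : WittVector p (PreTilt O p)) := fun m => hYZ _ _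
        set S : ℕ → WittVector p (PreTilt O p) :=
          fun m => ∑ j ∈ Finset.range m,
            Y (g j).1 (g j).2 * (p : WittVector p (PreTilt O p)) ^ j with hSdef
        have hS : ∀ m, x - ξ * S m
            = (g m).1 * (p : WittVector p (PreTilt O p)) ^ m := by
          intro m
          induction m with
          | zero =>
            simp only [hSdef, Finset.range_zero, Finset.sum_empty, mul_zero, sub_zero, pow_zero,
              mul_one]
            rfl
          | succ m ih =>
            have hsum : S (m + 1) = S m + Y (g m).1 (g m).2
                * (p : WittVector p (PreTilt O p)) ^ m := Finset.sum_range_succ _ _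
            rw [hsum]
            linear_combination ih + (p : WittVector p (PreTilt O p)) ^ m * hgdec m
        have hcohS : ∀ m, ∃ w, S (m + 1) - S m
            = w * (p : WittVector p (PreTilt O p)) ^ m := by
          intro m
          refine ⟨Y (g m).1 (g m).2, ?_⟩
          simp only [hSdef]
          rw [Finset.sum_range_succ]
          ring
        obtain ⟨Lp, hLp⟩ := aux_padic_limit S hcohS
        have hzero : ∀ i, (x - ξ * Lp).coeff i = 0 := by
          intro i
          obtain ⟨w, hw⟩ := hLp (i + 1)
          have hSm := hS (i + 1)
          have heq : x - ξ * Lp = ((g (i + 1)).1 - ξ * w)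
              * (p : WittVector p (PreTilt O p)) ^ (i + 1) := by
            linear_combination hSm - ξ * hw
          rw [heq]
          exact aux_mul_pow_p_coeff _ _ i (by omega)
        refine ⟨Lp, ?_⟩
        have hfin : x - ξ * Lp = 0 := by
          apply WittVector.ext
          intro i
          rw [hzero i, WittVector.zero_coeff]
        exact sub_eq_zero.mp hfin
    · rw [Ideal.span_le]
      intro y hy
      rw [Set.mem_singleton_iff] at hy
      subst hy
      exact RingHom.mem_ker.mpr hθξ
  rw [hker]
  have hH : IsHausdorff (Ideal.span {ξ}) (WittVector p (PreTilt O p)) := by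
    refine ⟨fun x hx => ?_⟩
    have hdvd : ∀ k : ℕ, ∃ c, x = ξ ^ (2 * k) * c := by
      intro k
      have h1 := hx (2 * k)
      rwa [SModEq.zero, hsmulA, Ideal.mem_span_singleton] at h1
    apply WittVector.ext
    intro i
    rw [WittVector.zero_coeff]
    apply aux_zero_of_all_div p K v O hv π hπ0 hπp ϖ hϖ
    intro m
    set k := max m (i + 1) with hk
    obtain ⟨c, hc⟩ := hdvd k
    have h2 := hξdvd k c i (by omega)
    rw [← hc] at h2
    obtain ⟨w, hw⟩ := dvd_trans (pow_dvd_pow ϖ (le_max_left m (i + 1))) h2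
    exact ⟨w, hw⟩
  have hP : IsPrecomplete (Ideal.span {ξ}) (WittVector p (PreTilt O p)) := by
    refine ⟨fun f hf => ?_⟩
    have hfd : ∀ m n : ℕ, m ≤ n → ∃ c, f n - f m = ξ ^ m * c := by
      intro m n hmn
      have h1 := hf hmn
      rw [SModEq.sub_mem, hsmulA, Ideal.mem_span_singleton] at h1
      obtain ⟨c, hc⟩ := h1
      exact ⟨-c, by rw [show f n - f m = -(f m - f n) by ring, hc]; ring⟩
    have hgL : ∀ n m, n ≤ m → ∀ i < n,
        ϖ ^ n ∣ (f (2 * m)).coeff i - (f (2 * n)).coeff i := by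
      intro n m hnm i hi
      obtain ⟨c, hc⟩ := hfd (2 * n) (2 * m) (by omega)
      have heq : f (2 * m) = f (2 * n) + ξ ^ (2 * n) * c := by rw [← hc]; ring
      rw [← Ideal.mem_span_singleton]
      have hmem := aux_coeff_add_sub_mem
        (Ideal.span ({ϖ ^ n} : Set (PreTilt O p))) (f (2 * n)) (ξ ^ (2 * n) * c) i
        (fun j hj => Ideal.mem_span_singleton.mpr (hξdvd n c j (by omega)))
      rwa [← heq] at hmem
    obtain ⟨L, hL⟩ := WL (fun k => f (2 * k)) hgL
    refine ⟨L, fun n => ?_⟩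
    rw [SModEq.sub_mem, hsmulA, Ideal.mem_span_singleton]
    -- tail sequence
    set e : ℕ → WittVector p (PreTilt O p) :=
      fun k => (hfd n (2 * (n + k)) (by omega)).choose with hedef
    have he : ∀ k, f (2 * (n + k)) - f n = ξ ^ n * e k :=
      fun k => (hfd n (2 * (n + k)) (by omega)).choose_spec
    have hgE : ∀ k k', k ≤ k' → ∀ i < k, ϖ ^ k ∣ (e k').coeff i - (e k).coeff i := by
      intro k k' hk i hik
      obtain ⟨d, hd⟩ := hfd (2 * (n + k)) (2 * (n + k')) (by omega)
      have hcan : ξ ^ n * (e k' - e k) = ξ ^ n * (ξ ^ (n + 2 * k) * d) := by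
        have h1 : ξ ^ n * (e k' - e k)
            = (f (2 * (n + k')) - f n) - (f (2 * (n + k)) - f n) := by
          rw [he k', he k]; ring
        have h2 : ξ ^ n * (ξ ^ (n + 2 * k) * d) = ξ ^ (2 * (n + k)) * d := by
          rw [← mul_assoc, ← pow_add, show n + (n + 2 * k) = 2 * (n + k) by omega]
        rw [h1, h2, ← hd]; ring
      have hek : e k' - e k = ξ ^ (n + 2 * k) * d :=
        mul_left_cancel₀ (pow_ne_zero n hξne) hcan
      have heq : e k' = e k + ξ ^ (2 * k) * (ξ ^ n * d) := by
        rw [← mul_assoc, ← pow_add, show 2 * k + n = n + 2 * k by omega, ← hek]; ring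
      rw [← Ideal.mem_span_singleton]
      have hmem := aux_coeff_add_sub_mem
        (Ideal.span ({ϖ ^ k} : Set (PreTilt O p))) (e k) (ξ ^ (2 * k) * (ξ ^ n * d)) i
        (fun j hj => Ideal.mem_span_singleton.mpr (hξdvd k (ξ ^ n * d) j (by omega)))
      rwa [← heq] at hmem
    obtain ⟨Le, hLe⟩ := WL e hgE
    have hD : L - f n - ξ ^ n * Le = 0 := by
      apply WittVector.ext
      intro i
      rw [WittVector.zero_coeff]
      apply aux_zero_of_all_div p K v O hv π hπ0 hπp ϖ hϖ
      intro m
      set k := max m (i + 1) with hk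
      have hik : i < k := by omega
      have hikn : i < n + k := by omega
      set I : Ideal (PreTilt O p) := Ideal.span ({ϖ ^ k} : Set (PreTilt O p))
        with hI
      have ht1 : ∀ j ≤ i, (L - f (2 * (n + k))).coeff j ∈ I := by
        intro j hj
        apply aux_coeff_sub_mem
        intro j' hj'
        rw [hI, Ideal.mem_span_singleton]
        exact dvd_trans (pow_dvd_pow ϖ (by omega : k ≤ n + k))
          (hL (n + k) j' (by omega))
      have ht2 : ∀ j ≤ i, ((Le - e k) * ξ ^ n).coeff j ∈ I := by
        intro j hj
        apply aux_coeff_mul_mem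
        intro j' hj'
        apply aux_coeff_sub_mem
        intro j'' hj''
        rw [hI, Ideal.mem_span_singleton]
        exact hLe k j'' (by omega)
      have hDeq : L - f n - ξ ^ n * Le
          = (L - f (2 * (n + k))) - ((Le - e k) * ξ ^ n) := by
        linear_combination he k
      have hmem : (L - f n - ξ ^ n * Le).coeff i ∈ I := by
        rw [hDeq]
        apply aux_coeff_sub_mem
        intro j hj
        exact Submodule.sub_mem _ (ht1 j hj) (ht2 j hj)
      rw [hI, Ideal.mem_span_singleton] at hmem
      obtain ⟨w, hw⟩ := dvd_trans (pow_dvd_pow ϖ (le_max_left m (i + 1))) hmem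
      exact ⟨w, hw⟩
    exact ⟨-Le, by linear_combination -hD⟩
  exact { toIsHausdorff := hH, toIsPrecomplete := hP }
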